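/- Let (X,T) be a topological dynamical system. For every T-invariant Borel probability measure μ on X, h̃_μ(T) ≤ h_μ(T), i.e. for every continuous partition of unity Φ on X one has h̃_μ(T,Φ) ≤ h_μ(T), the Kolmogorov–Sinai entropy of (T,μ). -/

import Mathlib

open MeasureTheory Filter Set

/-! ### Partitions of unity -/

/-- A finite partition of unity on `X`: a finite family of functions `X → [0,1]`
summing to `1` everywhere. -/
structure PartUnity (X : Type*) where
  n : ℕ
  f : Fin n → X → ℝ
  nonneg : ∀ i x, 0 ≤ f i x
  le_one : ∀ i x, f i x ≤ 1
  sum_one : ∀ x, ∑ i, f i x = 1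

namespace PartUnity

variable {X Y : Type*}

/-- A continuous partition of unity. -/
def Cont [TopologicalSpace X] (Φ : PartUnity X) : Prop := ∀ i, Continuous (Φ.f i)

/-- A measurable partition of unity. -/
def Meas [MeasurableSpace X] (Φ : PartUnity X) : Prop := ∀ i, Measurable (Φ.f i)

/-- A positive partition of unity. -/
def Pos (Φ : PartUnity X) : Prop := ∀ i x, 0 < Φ.f i x

/-- The join `Φ ∨ Ψ = {φ·ψ : φ ∈ Φ, ψ ∈ Ψ}` of two partitions of unity. -/
def join (Φ Ψ : PartUnity X) : PartUnity X where
  n := Φ.n * Ψ.n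
  f k x := Φ.f (finProdFinEquiv.symm k).1 x * Ψ.f (finProdFinEquiv.symm k).2 x
  nonneg k x := mul_nonneg (Φ.nonneg _ x) (Ψ.nonneg _ x)
  le_one k x := mul_le_one₀ (Φ.le_one _ x) (Ψ.nonneg _ x) (Ψ.le_one _ x)
  sum_one x := by
    rw [← Equiv.sum_comp (finProdFinEquiv : Fin Φ.n × Fin Ψ.n ≃ Fin (Φ.n * Ψ.n))
      (fun k => Φ.f (finProdFinEquiv.symm k).1 x * Ψ.f (finProdFinEquiv.symm k).2 x)]
    simp only [Equiv.symm_apply_apply]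
    rw [Fintype.sum_prod_type]
    dsimp only
    rw [← Finset.sum_mul_sum, Φ.sum_one x, Ψ.sum_one x, one_mul]

/-- Pull back a partition of unity by a map: `TΦ = {φ ∘ T : φ ∈ Φ}`. -/
def comp (Φ : PartUnity X) (T : Y → X) : PartUnity Y where
  n := Φ.n
  f i y := Φ.f i (T y)
  nonneg i y := Φ.nonneg i (T y)
  le_one i y := Φ.le_one i (T y)
  sum_one y := Φ.sum_one (T y)

/-- The trivial partition of unity `{1}`. -/
def triv (X : Type*) : PartUnity X where
  n := 1
  f _ _ := 1
  nonneg _ _ := zero_le_one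
  le_one _ _ := le_rfl
  sum_one _ := by simp

/-- `dyn T Φ n` is the dynamical join `Φ₀ⁿ⁻¹ = ⋁_{i=0}^{n-1} TⁱΦ`
(joined with a harmless trivial factor). -/
def dyn (T : X → X) (Φ : PartUnity X) : ℕ → PartUnity X
  | 0 => triv X
  | n + 1 => Φ.join ((dyn T Φ n).comp T)

/-- The product partition of unity `Φ ⊗ Ψ` on `X × Y`. -/
def prod (Φ : PartUnity X) (Ψ : PartUnity Y) : PartUnity (X × Y) where
  n := Φ.n * Ψ.n
  f k p := Φ.f (finProdFinEquiv.symm k).1 p.1 * Ψ.f (finProdFinEquiv.symm k).2 p.2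
  nonneg k p := mul_nonneg (Φ.nonneg _ _) (Ψ.nonneg _ _)
  le_one k p := mul_le_one₀ (Φ.le_one _ _) (Ψ.nonneg _ _) (Ψ.le_one _ _)
  sum_one p := by
    rw [← Equiv.sum_comp (finProdFinEquiv : Fin Φ.n × Fin Ψ.n ≃ Fin (Φ.n * Ψ.n))
      (fun k => Φ.f (finProdFinEquiv.symm k).1 p.1 * Ψ.f (finProdFinEquiv.symm k).2 p.2)]
    simp only [Equiv.symm_apply_apply]
    rw [Fintype.sum_prod_type]
    dsimp only
    rw [← Finset.sum_mul_sum, Φ.sum_one p.1, Ψ.sum_one p.2, one_mul]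

/-- The diameter of a partition of unity: the maximum of the diameters of the
supports of its members. -/
noncomputable def diam [PseudoMetricSpace X] (Φ : PartUnity X) : ℝ :=
  ⨆ i, Metric.diam (tsupport (Φ.f i))

end PartUnity

/-! ### Metric entropy via partitions of unity -/

variable {X Y : Type*}

/-- The static entropy `H̃_μ(Φ) = Σ_φ ( −μ(φ) log μ(φ) + μ(φ log φ) )`. -/
noncomputable def statEnt [MeasurableSpace X] (μ : Measure X) (Φ : PartUnity X) : ℝ :=
  ∑ i, (-((∫ x, Φ.f i x ∂μ) * Real.log (∫ x, Φ.f i x ∂μ)) +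
    ∫ x, Φ.f i x * Real.log (Φ.f i x) ∂μ)

/-- The conditional measure `μ_ψ`, determined by `μ_ψ(φ) = μ(φψ)/μ(ψ)`. -/
noncomputable def condMeas [MeasurableSpace X] (μ : Measure X) (ψ : X → ℝ) : Measure X :=
  (ENNReal.ofReal (∫ x, ψ x ∂μ))⁻¹ • μ.withDensity (fun x => ENNReal.ofReal (ψ x))

/-- The conditional static entropy `H̃_μ(Φ | Ψ) = Σ_ψ μ(ψ) H̃_{μ_ψ}(Φ)`
(terms with `μ(ψ) = 0` vanish since they are multiplied by `μ(ψ) = 0`). -/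
noncomputable def condStatEnt [MeasurableSpace X] (μ : Measure X) (Φ Ψ : PartUnity X) : ℝ :=
  ∑ j, (∫ x, Ψ.f j x ∂μ) * statEnt (condMeas μ (Ψ.f j)) Φ

/-- The local metric entropy `h̃_μ(T,Φ) = lim_n H̃_μ(Φ₀ⁿ⁻¹)/n`. -/
noncomputable def locEnt [MeasurableSpace X] (T : X → X) (μ : Measure X) (Φ : PartUnity X) : ℝ :=
  Filter.atTop.limsup fun n : ℕ => statEnt μ (PartUnity.dyn T Φ n) / (n : ℝ)

/-- The local conditional metric entropy `h̃_μ(T,Φ|Ψ) = lim_n H̃_μ(Φ₀ⁿ⁻¹|Ψ₀ⁿ⁻¹)/n`. -/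
noncomputable def condLocEnt [MeasurableSpace X] (T : X → X) (μ : Measure X)
    (Φ Ψ : PartUnity X) : ℝ :=
  Filter.atTop.limsup fun n : ℕ =>
    condStatEnt μ (PartUnity.dyn T Φ n) (PartUnity.dyn T Ψ n) / (n : ℝ)

/-- The metric entropy `h̃_μ(T)`: supremum of `h̃_μ(T,Φ)` over continuous
partitions of unity. -/
noncomputable def metEnt [TopologicalSpace X] [MeasurableSpace X]
    (T : X → X) (μ : Measure X) : EReal :=
  ⨆ Φ : {Φ : PartUnity X // Φ.Cont}, ((locEnt T μ Φ.1 : ℝ) : EReal)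

/-! ### Topological entropy via partitions of unity -/

/-- The topological static entropy `H̃(Φ) = Σ_φ sup φ`. -/
noncomputable def topStat (Φ : PartUnity X) : ℝ := ∑ i, ⨆ x, Φ.f i x

/-- The local topological entropy `h̃(T,Φ) = lim_n (1/n) log H̃(Φ₀ⁿ⁻¹)`. -/
noncomputable def topLocEnt (T : X → X) (Φ : PartUnity X) : ℝ :=
  Filter.atTop.limsup fun n : ℕ => Real.log (topStat (PartUnity.dyn T Φ n)) / (n : ℝ)

/-- The topological entropy `h̃_top(T)`: supremum of `h̃(T,Φ)` over continuous
partitions of unity. -/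
noncomputable def topEnt [TopologicalSpace X] (T : X → X) : EReal :=
  ⨆ Φ : {Φ : PartUnity X // Φ.Cont}, ((topLocEnt T Φ.1 : ℝ) : EReal)

/-! ### Classical Kolmogorov–Sinai entropy -/

/-- A finite Borel partition of `X` (indexed; atoms may be empty). -/
structure FinBorelPart (X : Type*) [MeasurableSpace X] where
  n : ℕ
  A : Fin n → Set X
  meas : ∀ i, MeasurableSet (A i)
  disj : ∀ i j, i ≠ j → Disjoint (A i) (A j)
  cover : ⋃ i, A i = Set.univ

/-- Local Kolmogorov–Sinai entropy `h_μ(T,𝒜) = lim_n (1/n) Σ_{A ∈ 𝒜₀ⁿ⁻¹} −μ(A) log μ(A)`. -/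
noncomputable def ksLocEnt [MeasurableSpace X] (T : X → X) (μ : Measure X)
    (P : FinBorelPart X) : ℝ :=
  Filter.atTop.limsup fun n : ℕ =>
    (∑ σ : Fin n → Fin P.n,
      Real.negMulLog (μ (⋂ i : Fin n, T^[(i : ℕ)] ⁻¹' P.A (σ i))).toReal) / (n : ℝ)

/-- The Kolmogorov–Sinai metric entropy `h_μ(T)`. -/
noncomputable def ksEnt [MeasurableSpace X] (T : X → X) (μ : Measure X) : EReal :=
  ⨆ P : FinBorelPart X, ((ksLocEnt T μ P : ℝ) : EReal)

/-! ### Classical topological entropy via open covers -/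

/-- A finite open cover of `X`. -/
structure FinOpenCover (X : Type*) [TopologicalSpace X] where
  n : ℕ
  U : Fin n → Set X
  opn : ∀ i, IsOpen (U i)
  cov : ⋃ i, U i = Set.univ

/-- The member `⋂_{i<n} T^{-i} U_{σ(i)}` of the dynamical refinement of a cover. -/
def dynSet (T : X → X) {m : ℕ} (U : Fin m → Set X) (n : ℕ) (σ : Fin n → Fin m) : Set X :=
  ⋂ i : Fin n, T^[(i : ℕ)] ⁻¹' U (σ i)

/-- Minimal cardinality of a subfamily of `V` covering `S`. -/
noncomputable def coverNum {α : Type*} [Fintype α] (V : α → Set X) (S : Set X) : ℕ :=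
  sInf {k | ∃ t : Finset α, t.card = k ∧ S ⊆ ⋃ i ∈ t, V i}

/-- The local classical topological entropy `h(T,𝒰)` of an open cover. -/
noncomputable def covLocEnt [TopologicalSpace X] (T : X → X) (C : FinOpenCover X) : ℝ :=
  Filter.atTop.limsup fun n : ℕ =>
    Real.log ((coverNum (fun σ : Fin n → Fin C.n => dynSet T C.U n σ) Set.univ : ℕ) : ℝ) / (n : ℝ)

/-- The classical topological entropy `h_top(T)` via open covers. -/
noncomputable def topEntCov [TopologicalSpace X] (T : X → X) : EReal :=
  ⨆ C : FinOpenCover X, ((covLocEnt T C : ℝ) : EReal)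

/-! ### Misiurewicz topological tail entropy -/

/-- The local conditional topological entropy `h(𝒰|𝒱)` of two open covers. -/
noncomputable def misCondLoc [TopologicalSpace X] (T : X → X) (CU CV : FinOpenCover X) : ℝ :=
  Filter.atTop.limsup fun n : ℕ =>
    Real.log (((⨆ τ : Fin n → Fin CV.n,
      coverNum (fun σ : Fin n → Fin CU.n => dynSet T CU.U n σ) (dynSet T CV.U n τ) : ℕ)) : ℝ) / (n : ℝ)

/-- The conditional topological entropy `h(T|𝒱) = sup_𝒰 h(𝒰|𝒱)`. -/
noncomputable def misCond [TopologicalSpace X] (T : X → X) (CV : FinOpenCover X) : EReal :=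
  ⨆ CU : FinOpenCover X, ((misCondLoc T CU CV : ℝ) : EReal)

/-- Misiurewicz's topological tail entropy `h*(T) = inf_𝒱 h(T|𝒱)`. -/
noncomputable def misTail [TopologicalSpace X] (T : X → X) : EReal :=
  ⨅ CV : FinOpenCover X, misCond T CV

/-! ### Topological tail entropy via partitions of unity -/

/-- `H̃(Φ|ψ) = Σ_φ sup_{supp ψ} φ`. -/
noncomputable def condTopStatPU [TopologicalSpace X] (Φ : PartUnity X) (ψ : X → ℝ) : ℝ :=
  ∑ i, ⨆ x ∈ tsupport ψ, Φ.f i x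

/-- The weight set `D(Ψ) = {a : inf ψ ≤ a_ψ ≤ sup ψ, Σ a_ψ = 1}`. -/
def weights (Ψ : PartUnity X) : Set (Fin Ψ.n → ℝ) :=
  {a | (∀ j, (⨅ x, Ψ.f j x) ≤ a j ∧ a j ≤ ⨆ x, Ψ.f j x) ∧ ∑ j, a j = 1}

/-- `H̃_n(Φ|Ψ) = sup_{a ∈ D(Ψ₀ⁿ⁻¹)} Σ_ψ a_ψ H̃(Φ₀ⁿ⁻¹|ψ)`. -/
noncomputable def tailStat [TopologicalSpace X] (T : X → X) (Φ Ψ : PartUnity X) (n : ℕ) : ℝ :=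
  sSup {r | ∃ a ∈ weights (PartUnity.dyn T Ψ n),
    r = ∑ j, a j * condTopStatPU (PartUnity.dyn T Φ n) ((PartUnity.dyn T Ψ n).f j)}

/-- The local conditional topological entropy `h̃(Φ|Ψ) = limsup_n (1/n) log H̃_n(Φ|Ψ)`. -/
noncomputable def tailLoc [TopologicalSpace X] (T : X → X) (Φ Ψ : PartUnity X) : ℝ :=
  Filter.atTop.limsup fun n : ℕ => Real.log (tailStat T Φ Ψ n) / (n : ℝ)

/-- The conditional topological entropy `h̃(T|Ψ) = sup_Φ h̃(Φ|Ψ)` over continuous `Φ`. -/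
noncomputable def condTopEntPU [TopologicalSpace X] (T : X → X) (Ψ : PartUnity X) : EReal :=
  ⨆ Φ : {Φ : PartUnity X // Φ.Cont}, ((tailLoc T Φ.1 Ψ : ℝ) : EReal)

/-- The topological tail entropy `h̃*(T) = inf_Ψ h̃(T|Ψ)` over continuous `Ψ`. -/
noncomputable def tailEntPU [TopologicalSpace X] (T : X → X) : EReal :=
  ⨅ Ψ : {Ψ : PartUnity X // Ψ.Cont}, condTopEntPU T Ψ.1

/-! ### Pressures -/

/-- The Birkhoff sum `S_n g = Σ_{i<n} g ∘ Tⁱ`. -/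
def birkhoff (T : X → X) (g : X → ℝ) (n : ℕ) (x : X) : ℝ :=
  ∑ i ∈ Finset.range n, g (T^[i] x)

/-- The static pressure `P̃(T,g,Φ,n) = Σ_{φ ∈ Φ₀ⁿ⁻¹} sup (φ e^{S_n g})`. -/
noncomputable def puPressStat (T : X → X) (g : X → ℝ) (Φ : PartUnity X) (n : ℕ) : ℝ :=
  ∑ i, ⨆ x, (PartUnity.dyn T Φ n).f i x * Real.exp (birkhoff T g n x)

/-- The local topological pressure `P̃_top(T,g,Φ) = lim_n (1/n) log P̃(T,g,Φ,n)`. -/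
noncomputable def puLocPress (T : X → X) (g : X → ℝ) (Φ : PartUnity X) : ℝ :=
  Filter.atTop.limsup fun n : ℕ => Real.log (puPressStat T g Φ n) / (n : ℝ)

/-- The topological pressure `P̃_top(T,g)` via continuous partitions of unity. -/
noncomputable def puTopPress [TopologicalSpace X] (T : X → X) (g : X → ℝ) : EReal :=
  ⨆ Φ : {Φ : PartUnity X // Φ.Cont}, ((puLocPress T g Φ.1 : ℝ) : EReal)

/-- The classical static pressure of an open cover:
`inf { Σ_{V ∈ 𝒱} sup_V e^{S_n g} : 𝒱 a subcover of 𝒰₀ⁿ⁻¹ }`. -/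
noncomputable def covPressStat [TopologicalSpace X] (T : X → X) (g : X → ℝ)
    (C : FinOpenCover X) (n : ℕ) : ℝ :=
  sInf {r | ∃ t : Finset (Fin n → Fin C.n),
    (Set.univ ⊆ ⋃ σ ∈ t, dynSet T C.U n σ) ∧
    r = ∑ σ ∈ t, ⨆ x ∈ dynSet T C.U n σ, Real.exp (birkhoff T g n x)}

/-- The local classical topological pressure of an open cover. -/
noncomputable def covLocPress [TopologicalSpace X] (T : X → X) (g : X → ℝ)
    (C : FinOpenCover X) : ℝ :=
  Filter.atTop.limsup fun n : ℕ => Real.log (covPressStat T g C n) / (n : ℝ)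

/-- The classical topological pressure `P_top(T,g)` via open covers. -/
noncomputable def topPress [TopologicalSpace X] (T : X → X) (g : X → ℝ) : EReal :=
  ⨆ C : FinOpenCover X, ((covLocPress T g C : ℝ) : EReal)

/-! ### Topological tail pressure -/

/-- `P̃_n(T,g,Φ|Ψ) = sup_{a ∈ D(Ψ₀ⁿ⁻¹)} Σ_ψ a_ψ Σ_φ sup_{supp ψ} (φ e^{S_n g})`. -/
noncomputable def tailPressStat [TopologicalSpace X] (T : X → X) (g : X → ℝ)
    (Φ Ψ : PartUnity X) (n : ℕ) : ℝ :=
  sSup {r | ∃ a ∈ weights (PartUnity.dyn T Ψ n),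
    r = ∑ j, a j * ∑ i, ⨆ x ∈ tsupport ((PartUnity.dyn T Ψ n).f j),
      (PartUnity.dyn T Φ n).f i x * Real.exp (birkhoff T g n x)}

/-- The local topological tail pressure `P̃(T,g,Φ|Ψ) = limsup_n (1/n) log P̃_n(T,g,Φ|Ψ)`. -/
noncomputable def tailLocPress [TopologicalSpace X] (T : X → X) (g : X → ℝ)
    (Φ Ψ : PartUnity X) : ℝ :=
  Filter.atTop.limsup fun n : ℕ => Real.log (tailPressStat T g Φ Ψ n) / (n : ℝ)

/-- The conditional topological pressure `P̃(T,g|Ψ) = sup_Φ P̃(T,g,Φ|Ψ)` over continuous `Φ`. -/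
noncomputable def condTopPressPU [TopologicalSpace X] (T : X → X) (g : X → ℝ)
    (Ψ : PartUnity X) : EReal :=
  ⨆ Φ : {Φ : PartUnity X // Φ.Cont}, ((tailLocPress T g Φ.1 Ψ : ℝ) : EReal)

/-- The topological tail pressure `P̃*(T,g) = inf_Ψ P̃(T,g|Ψ)` over continuous `Ψ`. -/
noncomputable def puTailPress [TopologicalSpace X] (T : X → X) (g : X → ℝ) : EReal :=
  ⨅ Ψ : {Ψ : PartUnity X // Ψ.Cont}, condTopPressPU T g Ψ.1

/-! ### Classical topological tail pressure (Li–Chen–Cheng) -/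

/-- The Bowen ball `B(x,ε,n) = {y : d(Tⁱx,Tⁱy) < ε for all 0 ≤ i < n}`. -/
def bowenBall [PseudoMetricSpace X] (T : X → X) (x : X) (ε : ℝ) (n : ℕ) : Set X :=
  {y | ∀ i < n, dist (T^[i] x) (T^[i] y) < ε}

/-- `E` is `(n,δ)`-separated: distinct points `y,z ∈ E` satisfy `d(Tⁱy,Tⁱz) > δ`
for some `0 ≤ i < n`. -/
def IsSep [PseudoMetricSpace X] (T : X → X) (n : ℕ) (δ : ℝ) (E : Finset X) : Prop :=
  ∀ y ∈ E, ∀ z ∈ E, y ≠ z → ∃ i < n, δ < dist (T^[i] y) (T^[i] z)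

/-- `P_n(T,g,δ,ε) = sup_x sup { Σ_{y∈E} e^{S_n g(y)} : E (n,δ)-separated ⊆ B(x,ε,n) }`. -/
noncomputable def sepPress [PseudoMetricSpace X] (T : X → X) (g : X → ℝ)
    (n : ℕ) (δ ε : ℝ) : ℝ :=
  ⨆ x : X, sSup {r | ∃ E : Finset X, ↑E ⊆ bowenBall T x ε n ∧ IsSep T n δ E ∧
    r = ∑ y ∈ E, Real.exp (birkhoff T g n y)}

/-- The classical topological tail pressure
`P*(T,g) = lim_{ε→0} lim_{δ→0} limsup_n (1/n) log P_n(T,g,δ,ε)`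
(the inner limits are monotone, hence given by `inf_ε sup_δ`). -/
noncomputable def tailPress [PseudoMetricSpace X] (T : X → X) (g : X → ℝ) : EReal :=
  ⨅ ε : {ε : ℝ // 0 < ε}, ⨆ δ : {δ : ℝ // 0 < δ},
    Filter.atTop.limsup fun n : ℕ => ((Real.log (sepPress T g n δ.1 ε.1) / (n : ℝ) : ℝ) : EReal)


open Real Finset

namespace EntAux

variable {α ι κ : Type*}

lemma gibbs (s : Finset α) (p q : α → ℝ) (hp : ∀ a ∈ s, 0 ≤ p a) (hq : ∀ a ∈ s, 0 ≤ q a)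
    (hs : ∑ a ∈ s, q a ≤ ∑ a ∈ s, p a) (h0 : ∀ a ∈ s, q a = 0 → p a = 0) :
    ∑ a ∈ s, negMulLog (p a) ≤ ∑ a ∈ s, -(p a * log (q a)) := by
  have key : ∀ a ∈ s, negMulLog (p a) - -(p a * log (q a)) ≤ q a - p a := by
    intro a ha
    rcases eq_or_lt_of_le (hp a ha) with h | h
    · simp [negMulLog, ← h, hq a ha]
    · have hq0 : 0 < q a := by
        rcases eq_or_lt_of_le (hq a ha) with h2 | h2
        · exact absurd (h0 a ha h2.symm) (by linarith)
        · exact h2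
      have hlog := Real.log_le_sub_one_of_pos (div_pos hq0 h)
      rw [Real.log_div (ne_of_gt hq0) (ne_of_gt h)] at hlog
      have h2 : p a * (q a / p a - 1) = q a - p a := by field_simp
      have h3 : p a * (log (q a) - log (p a)) ≤ q a - p a := by
        have := mul_le_mul_of_nonneg_left hlog (le_of_lt h)
        rwa [h2] at this
      simp only [negMulLog]
      nlinarith [h3, mul_sub (p a) (log (q a)) (log (p a))]
  have h1 := Finset.sum_le_sum key
  rw [Finset.sum_sub_distrib, Finset.sum_sub_distrib] at h1
  linarith

lemma negMulLog_add_le {a b : ℝ} (ha : 0 ≤ a) (hb : 0 ≤ b) :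
    negMulLog (a + b) ≤ negMulLog a + negMulLog b := by
  rcases eq_or_lt_of_le ha with h | h
  · simp [← h]
  rcases eq_or_lt_of_le hb with h' | h'
  · simp [← h']
  have hab : 0 < a + b := by linarith
  have l1 : log a ≤ log (a + b) := Real.log_le_log h (by linarith)
  have l2 : log b ≤ log (a + b) := Real.log_le_log h' (by linarith)
  simp only [negMulLog]
  nlinarith

lemma negMulLog_sum_le (s : Finset α) (g : α → ℝ) (hg : ∀ a ∈ s, 0 ≤ g a) :
    negMulLog (∑ a ∈ s, g a) ≤ ∑ a ∈ s, negMulLog (g a) := by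
  induction s using Finset.cons_induction with
  | empty => simp
  | cons a s ha ih =>
    rw [Finset.sum_cons, Finset.sum_cons]
    have h1 : 0 ≤ g a := hg a (Finset.mem_cons_self a s)
    have h2 : 0 ≤ ∑ x ∈ s, g x :=
      Finset.sum_nonneg fun x hx => hg x (Finset.mem_cons_of_mem hx)
    calc negMulLog (g a + ∑ x ∈ s, g x) ≤ negMulLog (g a) + negMulLog (∑ x ∈ s, g x) :=
          negMulLog_add_le h1 h2
      _ ≤ _ := add_le_add le_rfl (ih fun x hx => hg x (Finset.mem_cons_of_mem hx))

variable [Fintype ι] [Fintype κ] [DecidableEq ι] [DecidableEq κ]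

lemma sum_mul_comp (F : (ι → κ) → ℝ) (c : κ → ℝ) (i : ι) :
    ∑ σ : ι → κ, F σ * c (σ i) =
      ∑ j : κ, c j * ∑ σ : ι → κ, (if σ i = j then F σ else 0) := by
  have : ∀ j : κ, c j * ∑ σ : ι → κ, (if σ i = j then F σ else 0)
      = ∑ σ : ι → κ, (if σ i = j then F σ * c j else 0) := by
    intro j
    rw [Finset.mul_sum]
    exact Finset.sum_congr rfl fun σ _ => by split <;> ring
  simp only [this]
  rw [Finset.sum_comm]
  refine Finset.sum_congr rfl fun σ _ => ?_
  rw [Finset.sum_ite_eq (Finset.univ : Finset κ) (σ i) (fun j => F σ * c j)]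
  simp

lemma sum_pi_prod (f : ι → κ → ℝ) :
    ∑ σ : ι → κ, ∏ i, f i (σ i) = ∏ i, ∑ j, f i j := by
  rw [Finset.prod_univ_sum]
  rw [Fintype.piFinset_univ]

lemma sum_prod_eq (p : ι → κ → ℝ) (hrow : ∀ i, ∑ j, p i j = 1) (i₀ : ι) (j₀ : κ) :
    ∑ σ : ι → κ, (if σ i₀ = j₀ then ∏ i, p i (σ i) else 0) = p i₀ j₀ := by
  set q : ι → κ → ℝ := fun i j => if i = i₀ then (if j = j₀ then p i j else 0) else p i j with hq
  have h1 : ∀ σ : ι → κ, (if σ i₀ = j₀ then ∏ i, p i (σ i) else 0) = ∏ i, q i (σ i) := by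
    intro σ
    by_cases hσ : σ i₀ = j₀
    · rw [if_pos hσ]
      refine Finset.prod_congr rfl fun i _ => ?_
      by_cases hi : i = i₀
      · subst hi; simp [hq, hσ]
      · simp [hq, hi]
    · rw [if_neg hσ]
      refine (Finset.prod_eq_zero (Finset.mem_univ i₀) ?_).symm
      simp [hq, hσ]
  rw [Finset.sum_congr rfl fun σ _ => h1 σ, sum_pi_prod]
  rw [Finset.prod_eq_single i₀]
  · simp [hq]
  · intro b _ hb
    simp [hq, hb, hrow b]
  · intro h; exact absurd (Finset.mem_univ i₀) h

lemma negMulLog_prod_expand (s : Finset ι) (a : ι → ℝ) (ha : ∀ i ∈ s, 0 ≤ a i) :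
    negMulLog (∏ i ∈ s, a i) = ∑ i ∈ s, (∏ l ∈ s, a l) * (-log (a i)) := by
  by_cases h : ∃ i ∈ s, a i = 0
  · obtain ⟨i, hi, h0⟩ := h
    have hz : ∏ l ∈ s, a l = 0 := Finset.prod_eq_zero hi h0
    simp [hz]
  · push_neg at h
    rw [negMulLog, Real.log_prod h, Finset.mul_sum]
    exact Finset.sum_congr rfl fun i _ => by ring

lemma sum_negMulLog_prod (p : ι → κ → ℝ) (hp : ∀ i j, 0 ≤ p i j)
    (hrow : ∀ i, ∑ j, p i j = 1) :
    ∑ σ : ι → κ, negMulLog (∏ i, p i (σ i)) = ∑ i, ∑ j, negMulLog (p i j) := by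
  have h1 : ∀ σ : ι → κ, negMulLog (∏ i, p i (σ i))
      = ∑ i, (∏ l, p l (σ l)) * (-log (p i (σ i))) :=
    fun σ => negMulLog_prod_expand Finset.univ _ (fun i _ => hp i (σ i))
  rw [Finset.sum_congr rfl fun σ _ => h1 σ, Finset.sum_comm]
  refine Finset.sum_congr rfl fun i _ => ?_
  rw [sum_mul_comp (fun σ => ∏ l, p l (σ l)) (fun j => -log (p i j)) i]
  refine Finset.sum_congr rfl fun j _ => ?_
  rw [sum_prod_eq p hrow i j, negMulLog]
  ring

lemma sum_negMulLog_le_marg [Nonempty ι] (P : (ι → κ) → ℝ) (hP : ∀ σ, 0 ≤ P σ) :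
    ∑ σ : ι → κ, negMulLog (P σ) ≤
      (∑ i : ι, ∑ j : κ, negMulLog (∑ σ : ι → κ, if σ i = j then P σ else 0))
        - ((Fintype.card ι - 1 : ℕ) : ℝ) * negMulLog (∑ σ : ι → κ, P σ) := by
  set m := ∑ σ : ι → κ, P σ with hm
  set M : ι → κ → ℝ := fun i j => ∑ σ : ι → κ, if σ i = j then P σ else 0 with hM
  have hMnn : ∀ i j, 0 ≤ M i j := fun i j =>
    Finset.sum_nonneg fun σ _ => by by_cases h : σ i = j <;> simp [h, hP σ]
  have hMrow : ∀ i, ∑ j, M i j = m := by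
    intro i
    rw [hM]
    rw [Finset.sum_comm]
    refine Finset.sum_congr rfl fun σ _ => ?_
    rw [Finset.sum_ite_eq (Finset.univ : Finset κ) (σ i) (fun _ => P σ)]
    simp
  have hPM : ∀ (σ : ι → κ) (i : ι), P σ ≤ M i (σ i) := by
    intro σ i
    have := Finset.single_le_sum (f := fun σ' : ι → κ => if σ' i = σ i then P σ' else 0)
      (fun σ' _ => by by_cases h : σ' i = σ i <;> simp [h, hP σ']) (Finset.mem_univ σ)
    simpa using this
  have hmnn : 0 ≤ m := Finset.sum_nonneg fun σ _ => hP σ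
  rcases eq_or_lt_of_le hmnn with hm0 | hm0
  · have hPz : ∀ σ : ι → κ, P σ = 0 := by
      intro σ
      have := (Finset.sum_eq_zero_iff_of_nonneg (fun σ _ => hP σ)).mp hm0.symm
      exact this σ (Finset.mem_univ σ)
    have hMz : ∀ i j, M i j = 0 := fun i j =>
      Finset.sum_eq_zero fun σ _ => by simp [hPz σ]
    simp [hPz, hMz, ← hm0]
  · -- m > 0
    set c := Fintype.card ι with hc
    have hc1 : 1 ≤ c := Fintype.card_pos
    set q : (ι → κ) → ℝ := fun σ => (∏ i, M i (σ i)) * (m ^ (c - 1))⁻¹ with hqdef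
    have hpow : 0 < m ^ (c - 1) := pow_pos hm0 _
    have hqnn : ∀ σ, 0 ≤ q σ := fun σ =>
      mul_nonneg (Finset.prod_nonneg fun i _ => hMnn i (σ i)) (le_of_lt (inv_pos.mpr hpow))
    have hqsum : ∑ σ : ι → κ, q σ = m := by
      rw [hqdef, ← Finset.sum_mul, sum_pi_prod]
      have : ∀ i : ι, ∑ j, M i j = m := hMrow
      rw [Finset.prod_congr rfl fun i _ => this i, Finset.prod_const, Finset.card_univ, ← hc]
      have hcc : c - 1 + 1 = c := Nat.succ_pred_eq_of_pos hc1
      rw [← hcc, pow_succ]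
      field_simp
      simp
    have hq0 : ∀ σ, q σ = 0 → P σ = 0 := by
      intro σ h
      rcases mul_eq_zero.mp h with h | h
      · obtain ⟨i, _, hi⟩ := Finset.prod_eq_zero_iff.mp h
        exact le_antisymm (hi ▸ hPM σ i) (hP σ)
      · exact absurd h (by positivity)
    have hgibbs := gibbs Finset.univ P q (fun σ _ => hP σ) (fun σ _ => hqnn σ)
      (by rw [hqsum]) (fun σ _ => hq0 σ)
    have hterm : ∀ σ : ι → κ, -(P σ * log (q σ)) =
        (∑ i, P σ * (-log (M i (σ i)))) + P σ * (((c - 1 : ℕ) : ℝ) * log m) := by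
      intro σ
      rcases eq_or_lt_of_le (hP σ) with h | h
      · simp [← h]
      · have hMpos : ∀ i, 0 < M i (σ i) := fun i => lt_of_lt_of_le h (hPM σ i)
        have hprodpos : 0 < ∏ i, M i (σ i) := Finset.prod_pos fun i _ => hMpos i
        rw [hqdef]
        rw [Real.log_mul (ne_of_gt hprodpos) (by positivity),
          Real.log_prod (fun i _ => ne_of_gt (hMpos i)), Real.log_inv, Real.log_pow]
        have hsum : ∑ i, P σ * (-log (M i (σ i))) = -(P σ * ∑ i, log (M i (σ i))) := by
          rw [Finset.mul_sum, ← Finset.sum_neg_distrib]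
          exact Finset.sum_congr rfl fun i _ => by ring
        rw [hsum]
        push_cast [Nat.cast_sub hc1]
        ring
    have hcalc : (∑ σ : ι → κ, -(P σ * log (q σ)))
        = ∑ i : ι, ∑ j : κ, negMulLog (∑ σ : ι → κ, if σ i = j then P σ else 0)
            - ((c - 1 : ℕ) : ℝ) * negMulLog m := by
      rw [Finset.sum_congr rfl fun σ _ => hterm σ]
      rw [Finset.sum_add_distrib, ← Finset.sum_mul, ← hm]
      have part1 : ∑ σ : ι → κ, ∑ i, P σ * (-log (M i (σ i)))
          = ∑ i : ι, ∑ j : κ, negMulLog (M i j) := by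
        rw [Finset.sum_comm]
        refine Finset.sum_congr rfl fun i _ => ?_
        rw [sum_mul_comp P (fun j => -log (M i j)) i]
        exact Finset.sum_congr rfl fun j _ => by rw [negMulLog]; ring
      rw [part1, hM]
      simp only [negMulLog]
      ring
    exact hgibbs.trans (le_of_eq hcalc)

end EntAux


section Main

open Real MeasureTheory

/-- The member `∏_{i<n} φ_{σ i} ∘ Tⁱ` of the dynamical join. -/
def entPsi {X : Type*} (T : X → X) (Φ : PartUnity X) (n : ℕ)
    (σ : Fin n → Fin Φ.n) (x : X) : ℝ :=
  ∏ i : Fin n, Φ.f (σ i) (T^[(i : ℕ)] x)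

/-- The cylinder set `⋂_{i<n} T^{-i} A_{τ i}`. -/
def entCyl {X : Type*} (T : X → X) {Mn n : ℕ} (A : Fin Mn → Set X)
    (τ : Fin n → Fin Mn) : Set X :=
  ⋂ i : Fin n, T^[(i : ℕ)] ⁻¹' A (τ i)

/-- Description of the dynamical join as an explicit product family. -/
lemma dyn_desc {X : Type*} (T : X → X) (Φ : PartUnity X) (n : ℕ) :
    ∃ e : Fin ((PartUnity.dyn T Φ n).n) ≃ (Fin n → Fin Φ.n),
      ∀ j : Fin ((PartUnity.dyn T Φ n).n),
        (PartUnity.dyn T Φ n).f j = entPsi T Φ n (e j) := by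
  induction n with
  | zero =>
    haveI hu : Unique (Fin (PartUnity.dyn T Φ 0).n) := by
      show Unique (Fin 1); infer_instance
    refine ⟨Equiv.ofUnique _ _, fun j => ?_⟩
    funext x
    simp [PartUnity.dyn, PartUnity.triv, entPsi]
  | succ n ih =>
    obtain ⟨e', he'⟩ := ih
    refine ⟨(finProdFinEquiv.symm.trans ((Equiv.refl (Fin Φ.n)).prodCongr e')).trans
      (Fin.consEquiv fun _ => Fin Φ.n), fun j => ?_⟩
    funext x
    show Φ.f (finProdFinEquiv.symm j).1 x
        * (PartUnity.dyn T Φ n).f (finProdFinEquiv.symm j).2 (T x) = _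
    rw [he' (finProdFinEquiv.symm j).2]
    simp only [entPsi, Equiv.trans_apply, Equiv.prodCongr_apply, Equiv.coe_refl, Prod.map]
    rw [Fin.prod_univ_succ]
    simp only [Fin.consEquiv, Equiv.coe_fn_mk, Fin.cons_zero, Fin.cons_succ,
      Fin.val_zero, Function.iterate_zero, id_eq, Fin.val_succ, Function.iterate_succ_apply]
    rfl

lemma statEnt_term {X : Type*} [MeasurableSpace X] (μ : Measure X) (g : X → ℝ) :
    -((∫ x, g x ∂μ) * Real.log (∫ x, g x ∂μ)) + ∫ x, g x * Real.log (g x) ∂μ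
      = negMulLog (∫ x, g x ∂μ) - ∫ x, negMulLog (g x) ∂μ := by
  have h1 : ∫ x, negMulLog (g x) ∂μ = - ∫ x, g x * Real.log (g x) ∂μ := by
    rw [← integral_neg]
    refine integral_congr_ae (Filter.Eventually.of_forall fun x => ?_)
    simp only [Real.negMulLog]; ring
  rw [h1]; simp only [Real.negMulLog]; ring

lemma statEnt_dyn {X : Type*} [MeasurableSpace X] (μ : Measure X) (T : X → X)
    (Φ : PartUnity X) (n : ℕ) :
    statEnt μ (PartUnity.dyn T Φ n) =
      ∑ σ : Fin n → Fin Φ.n,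
        (negMulLog (∫ x, entPsi T Φ n σ x ∂μ) - ∫ x, negMulLog (entPsi T Φ n σ x) ∂μ) := by
  obtain ⟨e, he⟩ := dyn_desc T Φ n
  rw [statEnt, ← Equiv.sum_comp e (fun σ : Fin n → Fin Φ.n =>
    (negMulLog (∫ x, entPsi T Φ n σ x ∂μ) - ∫ x, negMulLog (entPsi T Φ n σ x) ∂μ))]
  refine Finset.sum_congr rfl fun j _ => ?_
  simp only [he j]
  exact statEnt_term μ _

variable {X : Type*} [MetricSpace X] [CompactSpace X] [Nonempty X]
    [MeasurableSpace X] [BorelSpace X]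

lemma cont_integrable (μ : Measure X) [IsFiniteMeasure μ] (f : X → ℝ) (hf : Continuous f) :
    Integrable f μ :=
  hf.integrable_of_hasCompactSupport (HasCompactSupport.of_compactSpace f)

/-- The core estimate: `H̃_μ(Φ₀ⁿ⁻¹) ≤ H_μ(𝒜₀ⁿ⁻¹) + nkκ` for a fine partition `𝒜`. -/
lemma core_estimate
    (T : X → X) (hT : Continuous T) (μ : Measure X) [IsProbabilityMeasure μ]
    (Φ : PartUnity X) (hΦ : Φ.Cont)
    {Mn : ℕ} (A : Fin Mn → Set X) (hAm : ∀ m, MeasurableSet (A m))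
    (hAd : ∀ i j, i ≠ j → Disjoint (A i) (A j)) (hAc : ⋃ m, A m = Set.univ)
    (ω κ : ℝ) (hκ : 0 ≤ κ)
    (hosc : ∀ m j, ∀ x ∈ A m, ∀ y ∈ A m, |Φ.f j x - Φ.f j y| ≤ ω)
    (hκω : ∀ a b : ℝ, a ∈ Set.Icc (0:ℝ) 1 → b ∈ Set.Icc (0:ℝ) 1 → |a - b| ≤ ω →
      negMulLog a ≤ negMulLog b + κ)
    (n : ℕ) (hn : 1 ≤ n) :
    statEnt μ (PartUnity.dyn T Φ n) ≤
      (∑ τ : Fin n → Fin Mn, negMulLog ((μ (entCyl T A τ)).toReal))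
        + (n : ℝ) * (Φ.n : ℝ) * κ := by
  classical
  haveI : Nonempty (Fin n) := ⟨⟨0, hn⟩⟩
  set G : Fin n → Fin Φ.n → X → ℝ := fun i j x => Φ.f j (T^[(i : ℕ)] x) with hG
  have hGcont : ∀ i j, Continuous (G i j) := fun i j => (hΦ j).comp (hT.iterate _)
  have hψcont : ∀ σ, Continuous (entPsi T Φ n σ) :=
    fun σ => continuous_finset_prod _ (fun i _ => hGcont i (σ i))
  have hψnn : ∀ σ x, 0 ≤ entPsi T Φ n σ x :=
    fun σ x => Finset.prod_nonneg fun i _ => Φ.nonneg _ _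
  have hψsum : ∀ x, ∑ σ : Fin n → Fin Φ.n, entPsi T Φ n σ x = 1 := by
    intro x
    have h0 := EntAux.sum_pi_prod (fun (i : Fin n) (j : Fin Φ.n) => Φ.f j (T^[(i : ℕ)] x))
    rw [show (∑ σ : Fin n → Fin Φ.n, entPsi T Φ n σ x)
        = ∑ σ : Fin n → Fin Φ.n, ∏ i : Fin n,
          (fun (i : Fin n) (j : Fin Φ.n) => Φ.f j (T^[(i : ℕ)] x)) i (σ i) from rfl, h0]
    rw [Finset.prod_congr rfl fun (i : Fin n) (_ : i ∈ (Finset.univ : Finset (Fin n))) =>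
      Φ.sum_one (T^[(i : ℕ)] x)]
    exact Finset.prod_const_one
  have hBmeas : ∀ τ : Fin n → Fin Mn, MeasurableSet (entCyl T A τ) := fun τ =>
    MeasurableSet.iInter fun i => (hT.measurable.iterate _) (hAm (τ i))
  have hBdisj : Pairwise (Function.onFun Disjoint (entCyl T A (n := n))) := by
    intro τ τ' hττ'
    obtain ⟨i, hi⟩ : ∃ i, τ i ≠ τ' i := by
      by_contra h; push_neg at h; exact hττ' (funext h)
    exact Set.disjoint_of_subset (Set.iInter_subset _ i) (Set.iInter_subset _ i)
      ((hAd _ _ hi).preimage _)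
  have hBcover : ⋃ τ : Fin n → Fin Mn, entCyl T A τ = Set.univ := by
    ext x
    simp only [entCyl, Set.mem_iUnion, Set.mem_iInter, Set.mem_preimage, Set.mem_univ,
      iff_true]
    have hx : ∀ i : Fin n, ∃ m, T^[(i : ℕ)] x ∈ A m := by
      intro i
      have : T^[(i : ℕ)] x ∈ ⋃ m, A m := hAc ▸ Set.mem_univ _
      simpa using this
    choose τ hτ using hx
    exact ⟨τ, fun i => hτ i⟩
  have hsplit : ∀ f : X → ℝ, Continuous f →
      ∫ x, f x ∂μ = ∑ τ : Fin n → Fin Mn, ∫ x in entCyl T A τ, f x ∂μ := by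
    intro f hf
    rw [← setIntegral_univ, ← hBcover,
      integral_iUnion_fintype hBmeas hBdisj (fun τ => (cont_integrable μ f hf).integrableOn)]
  have hc_int : ∀ τ : Fin n → Fin Mn,
      ∫ x in entCyl T A τ, (1:ℝ) ∂μ = (μ (entCyl T A τ)).toReal := fun τ => by
    rw [setIntegral_const]; simp [measureReal_def]
  have hcnn : ∀ τ : Fin n → Fin Mn, 0 ≤ (μ (entCyl T A τ)).toReal :=
    fun τ => ENNReal.toReal_nonneg
  have hcsum : ∑ τ : Fin n → Fin Mn, (μ (entCyl T A τ)).toReal = 1 := by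
    have h1 := hsplit (fun _ => (1:ℝ)) continuous_const
    rw [integral_const] at h1
    simp only [measureReal_def, measure_univ, ENNReal.toReal_one, smul_eq_mul, one_mul] at h1
    rw [← Finset.sum_congr rfl fun τ (_ : τ ∈ Finset.univ) => hc_int τ, ← h1]
  set P : (Fin n → Fin Mn) → (Fin n → Fin Φ.n) → ℝ :=
    fun τ σ => ∫ x in entCyl T A τ, entPsi T Φ n σ x ∂μ with hP
  have hPnn : ∀ τ σ, 0 ≤ P τ σ := fun τ σ =>
    setIntegral_nonneg (hBmeas τ) (fun x _ => hψnn σ x)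
  have hPsum : ∀ τ, ∑ σ, P τ σ = (μ (entCyl T A τ)).toReal := by
    intro τ
    calc ∑ σ, P τ σ = ∫ x in entCyl T A τ, (∑ σ : Fin n → Fin Φ.n, entPsi T Φ n σ x) ∂μ :=
          (integral_finset_sum _
            (fun σ _ => (cont_integrable μ _ (hψcont σ)).integrableOn)).symm
      _ = ∫ x in entCyl T A τ, (1:ℝ) ∂μ :=
          integral_congr_ae (Filter.Eventually.of_forall fun x => hψsum x)
      _ = (μ (entCyl T A τ)).toReal := hc_int τ
  have hPtot : ∀ σ, ∫ x, entPsi T Φ n σ x ∂μ = ∑ τ, P τ σ :=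
    fun σ => hsplit _ (hψcont σ)
  have hMarg : ∀ (τ : Fin n → Fin Mn) (i : Fin n) (j : Fin Φ.n),
      (∑ σ : Fin n → Fin Φ.n, if σ i = j then P τ σ else 0)
        = ∫ x in entCyl T A τ, G i j x ∂μ := by
    intro τ i j
    have h1 : ∀ σ : Fin n → Fin Φ.n, (if σ i = j then P τ σ else 0)
        = ∫ x in entCyl T A τ, (if σ i = j then entPsi T Φ n σ x else 0) ∂μ := by
      intro σ; by_cases h : σ i = j <;> simp [h, hP]
    rw [Finset.sum_congr rfl fun σ _ => h1 σ]
    rw [← integral_finset_sum _ (fun σ _ => ?_)]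
    · refine integral_congr_ae (Filter.Eventually.of_forall fun x => ?_)
      exact EntAux.sum_prod_eq (fun (i : Fin n) (j : Fin Φ.n) => G i j x)
        (fun i => Φ.sum_one (T^[(i : ℕ)] x)) i j
    · by_cases h : σ i = j
      · simp only [h, if_true]
        exact (cont_integrable μ _ (hψcont σ)).integrableOn
      · simp only [h, if_false]
        exact (integrable_const (0:ℝ)).integrableOn
  have hpoint : ∀ x, ∑ σ : Fin n → Fin Φ.n, negMulLog (entPsi T Φ n σ x)
      = ∑ i : Fin n, ∑ j : Fin Φ.n, negMulLog (G i j x) :=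
    fun x => EntAux.sum_negMulLog_prod (fun (i : Fin n) (j : Fin Φ.n) => G i j x)
      (fun i j => Φ.nonneg _ _) (fun i => Φ.sum_one _)
  have hstep : ∀ (τ : Fin n → Fin Mn) (i : Fin n),
      ∑ j : Fin Φ.n, negMulLog (∫ x in entCyl T A τ, G i j x ∂μ)
      ≤ (∑ j : Fin Φ.n, ∫ x in entCyl T A τ, negMulLog (G i j x) ∂μ)
        + negMulLog ((μ (entCyl T A τ)).toReal)
        + (Φ.n : ℝ) * κ * (μ (entCyl T A τ)).toReal := by
    intro τ i
    rcases eq_or_lt_of_le (hcnn τ) with hc0 | hc0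
    · have hμ0 : μ (entCyl T A τ) = 0 := by
        rcases (ENNReal.toReal_eq_zero_iff _).mp hc0.symm with h | h
        · exact h
        · exact absurd h (measure_ne_top μ _)
      have hres : μ.restrict (entCyl T A τ) = 0 := Measure.restrict_eq_zero.mpr hμ0
      simp only [hres, integral_zero_measure, negMulLog_zero, ← hc0]
      simp [hκ]
    · set a : Fin Φ.n → ℝ :=
        fun j => (∫ x in entCyl T A τ, G i j x ∂μ) / (μ (entCyl T A τ)).toReal with ha
      have haint : ∀ j, ∫ x in entCyl T A τ, G i j x ∂μ
          = (μ (entCyl T A τ)).toReal * a j := fun j => by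
        rw [ha]; field_simp
      have hGnn : ∀ j, 0 ≤ ∫ x in entCyl T A τ, G i j x ∂μ := fun j =>
        setIntegral_nonneg (hBmeas τ) (fun x _ => Φ.nonneg _ _)
      have hann : ∀ j, 0 ≤ a j := fun j => div_nonneg (hGnn j) (hcnn τ)
      have hGle : ∀ j, ∫ x in entCyl T A τ, G i j x ∂μ ≤ (μ (entCyl T A τ)).toReal := by
        intro j
        rw [← hc_int τ]
        exact setIntegral_mono_on (cont_integrable μ _ (hGcont i j)).integrableOn
          (integrable_const 1).integrableOn (hBmeas τ) (fun x _ => Φ.le_one _ _)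
      have ha1 : ∀ j, a j ≤ 1 := fun j => (div_le_one hc0).mpr (hGle j)
      have hsuma : ∑ j, a j = 1 := by
        rw [ha, ← Finset.sum_div]
        rw [show ∑ j : Fin Φ.n, ∫ x in entCyl T A τ, G i j x ∂μ
            = ∫ x in entCyl T A τ, (∑ j : Fin Φ.n, G i j x) ∂μ from
          (integral_finset_sum _
            (fun j _ => (cont_integrable μ _ (hGcont i j)).integrableOn)).symm]
        rw [show (fun x => ∑ j : Fin Φ.n, G i j x) = fun _ => (1:ℝ) from
          funext fun x => Φ.sum_one (T^[(i : ℕ)] x)]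
        rw [hc_int τ]
        field_simp
      have hosc2 : ∀ (j : Fin Φ.n), ∀ x ∈ entCyl T A τ, |a j - G i j x| ≤ ω := by
        intro j x hx
        have hxA : T^[(i : ℕ)] x ∈ A (τ i) := by
          have := Set.mem_iInter.mp hx i; simpa using this
        have hub : ∫ y in entCyl T A τ, G i j y ∂μ
            ≤ (μ (entCyl T A τ)).toReal * (G i j x + ω) := by
          calc ∫ y in entCyl T A τ, G i j y ∂μ
              ≤ ∫ y in entCyl T A τ, (G i j x + ω) ∂μ := by
                refine setIntegral_mono_on (cont_integrable μ _ (hGcont i j)).integrableOn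
                  (integrable_const _).integrableOn (hBmeas τ) (fun y hy => ?_)
                have hyA : T^[(i : ℕ)] y ∈ A (τ i) := by
                  have := Set.mem_iInter.mp hy i; simpa using this
                have habs := hosc (τ i) j _ hyA _ hxA
                simp only [hG]; linarith [(abs_le.mp habs).2]
            _ = (μ (entCyl T A τ)).toReal * (G i j x + ω) := by
                rw [setIntegral_const]; simp [smul_eq_mul, measureReal_def]
        have hlb : (μ (entCyl T A τ)).toReal * (G i j x - ω)
            ≤ ∫ y in entCyl T A τ, G i j y ∂μ := by
          calc (μ (entCyl T A τ)).toReal * (G i j x - ω)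
              = ∫ y in entCyl T A τ, (G i j x - ω) ∂μ := by
                rw [setIntegral_const]; simp [smul_eq_mul, measureReal_def]
            _ ≤ ∫ y in entCyl T A τ, G i j y ∂μ := by
                refine setIntegral_mono_on (integrable_const _).integrableOn
                  (cont_integrable μ _ (hGcont i j)).integrableOn (hBmeas τ) (fun y hy => ?_)
                have hyA : T^[(i : ℕ)] y ∈ A (τ i) := by
                  have := Set.mem_iInter.mp hy i; simpa using this
                have habs := hosc (τ i) j _ hxA _ hyA
                simp only [hG]; linarith [(abs_le.mp habs).2]
        have h1 : a j ≤ G i j x + ω := by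
          rw [ha, div_le_iff₀ hc0, mul_comm]; exact hub
        have h2 : G i j x - ω ≤ a j := by
          rw [ha, le_div_iff₀ hc0, mul_comm]; exact hlb
        rw [abs_le]; constructor <;> linarith
      have hκ2 : ∀ (j : Fin Φ.n), ∀ x ∈ entCyl T A τ,
          negMulLog (a j) ≤ negMulLog (G i j x) + κ :=
        fun j x hx => hκω (a j) (G i j x) ⟨hann j, ha1 j⟩
          ⟨Φ.nonneg _ _, Φ.le_one _ _⟩ (hosc2 j x hx)
      have hint2 : ∀ j : Fin Φ.n,
          (μ (entCyl T A τ)).toReal * negMulLog (a j)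
            ≤ (∫ x in entCyl T A τ, negMulLog (G i j x) ∂μ)
              + κ * (μ (entCyl T A τ)).toReal := by
        intro j
        have hmono : ∫ x in entCyl T A τ, (negMulLog (a j) - κ) ∂μ
            ≤ ∫ x in entCyl T A τ, negMulLog (G i j x) ∂μ := by
          refine setIntegral_mono_on (integrable_const _).integrableOn
            (cont_integrable μ _ (Real.continuous_negMulLog.comp (hGcont i j))).integrableOn
            (hBmeas τ) (fun x hx => ?_)
          linarith [hκ2 j x hx]
        rw [setIntegral_const] at hmono
        simp only [smul_eq_mul, measureReal_def] at hmono
        nlinarith [hmono]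
      calc ∑ j : Fin Φ.n, negMulLog (∫ x in entCyl T A τ, G i j x ∂μ)
          = ∑ j : Fin Φ.n, (a j * negMulLog ((μ (entCyl T A τ)).toReal)
              + (μ (entCyl T A τ)).toReal * negMulLog (a j)) := by
            refine Finset.sum_congr rfl fun j _ => ?_
            rw [haint j, negMulLog_mul]
        _ ≤ ∑ j : Fin Φ.n, (a j * negMulLog ((μ (entCyl T A τ)).toReal)
              + ((∫ x in entCyl T A τ, negMulLog (G i j x) ∂μ)
                + κ * (μ (entCyl T A τ)).toReal)) :=
            Finset.sum_le_sum fun j _ => by linarith [hint2 j]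
        _ = (∑ j : Fin Φ.n, ∫ x in entCyl T A τ, negMulLog (G i j x) ∂μ)
              + negMulLog ((μ (entCyl T A τ)).toReal)
              + (Φ.n : ℝ) * κ * (μ (entCyl T A τ)).toReal := by
            rw [Finset.sum_add_distrib, Finset.sum_add_distrib, ← Finset.sum_mul, hsuma,
              Finset.sum_const, Finset.card_univ, Fintype.card_fin]
            push_cast
            ring
  have hτbound : ∀ τ : Fin n → Fin Mn, ∑ σ : Fin n → Fin Φ.n, negMulLog (P τ σ)
      ≤ (∑ i : Fin n, ∑ j : Fin Φ.n, ∫ x in entCyl T A τ, negMulLog (G i j x) ∂μ)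
        + negMulLog ((μ (entCyl T A τ)).toReal)
        + (n : ℝ) * (Φ.n : ℝ) * κ * (μ (entCyl T A τ)).toReal := by
    intro τ
    have hmarg := EntAux.sum_negMulLog_le_marg (P τ) (hPnn τ)
    rw [Fintype.card_fin, hPsum τ] at hmarg
    have hmarg2 : ∑ σ : Fin n → Fin Φ.n, negMulLog (P τ σ)
        ≤ (∑ i : Fin n, ∑ j : Fin Φ.n, negMulLog (∫ x in entCyl T A τ, G i j x ∂μ))
          - ((n - 1 : ℕ) : ℝ) * negMulLog ((μ (entCyl T A τ)).toReal) := by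
      refine hmarg.trans (le_of_eq ?_)
      congr 1
      refine Finset.sum_congr rfl fun i _ => Finset.sum_congr rfl fun j _ => ?_
      rw [hMarg τ i j]
    have hsum2 : ∑ i : Fin n, ∑ j : Fin Φ.n, negMulLog (∫ x in entCyl T A τ, G i j x ∂μ)
        ≤ (∑ i : Fin n, ∑ j : Fin Φ.n, ∫ x in entCyl T A τ, negMulLog (G i j x) ∂μ)
          + (n : ℝ) * (negMulLog ((μ (entCyl T A τ)).toReal)
            + (Φ.n : ℝ) * κ * (μ (entCyl T A τ)).toReal) := by
      calc ∑ i : Fin n, ∑ j : Fin Φ.n, negMulLog (∫ x in entCyl T A τ, G i j x ∂μ)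
          ≤ ∑ i : Fin n, ((∑ j : Fin Φ.n, ∫ x in entCyl T A τ, negMulLog (G i j x) ∂μ)
              + negMulLog ((μ (entCyl T A τ)).toReal)
              + (Φ.n : ℝ) * κ * (μ (entCyl T A τ)).toReal) :=
            Finset.sum_le_sum fun i _ => hstep τ i
        _ = _ := by
            rw [Finset.sum_add_distrib, Finset.sum_add_distrib, Finset.sum_const,
              Finset.sum_const, Finset.card_univ, Fintype.card_fin]
            push_cast
            ring
    have hcast : ((n - 1 : ℕ) : ℝ) = (n : ℝ) - 1 := by
      rw [Nat.cast_sub hn]; norm_num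
    have hnng : 0 ≤ negMulLog ((μ (entCyl T A τ)).toReal) :=
      negMulLog_nonneg (hcnn τ) (by
        calc (μ (entCyl T A τ)).toReal
            ≤ ∑ τ', (μ (entCyl T A τ')).toReal :=
              Finset.single_le_sum (fun τ' _ => hcnn τ') (Finset.mem_univ τ)
          _ = 1 := hcsum)
    rw [hcast] at hmarg2
    calc ∑ σ : Fin n → Fin Φ.n, negMulLog (P τ σ)
        ≤ (∑ i : Fin n, ∑ j : Fin Φ.n, negMulLog (∫ x in entCyl T A τ, G i j x ∂μ))
            - ((n : ℝ) - 1) * negMulLog ((μ (entCyl T A τ)).toReal) := hmarg2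
      _ ≤ (∑ i : Fin n, ∑ j : Fin Φ.n, ∫ x in entCyl T A τ, negMulLog (G i j x) ∂μ)
            + (n : ℝ) * (negMulLog ((μ (entCyl T A τ)).toReal)
              + (Φ.n : ℝ) * κ * (μ (entCyl T A τ)).toReal)
            - ((n : ℝ) - 1) * negMulLog ((μ (entCyl T A τ)).toReal) := by
          linarith [hsum2]
      _ = (∑ i : Fin n, ∑ j : Fin Φ.n, ∫ x in entCyl T A τ, negMulLog (G i j x) ∂μ)
            + negMulLog ((μ (entCyl T A τ)).toReal)
            + (n : ℝ) * (Φ.n : ℝ) * κ * (μ (entCyl T A τ)).toReal := by ring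
  have hT2 : ∑ σ : Fin n → Fin Φ.n, ∫ x, negMulLog (entPsi T Φ n σ x) ∂μ
      = ∑ τ : Fin n → Fin Mn, ∑ i : Fin n, ∑ j : Fin Φ.n,
          ∫ x in entCyl T A τ, negMulLog (G i j x) ∂μ := by
    have hgcont : Continuous fun x => ∑ i : Fin n, ∑ j : Fin Φ.n, negMulLog (G i j x) :=
      continuous_finset_sum _ fun i _ => continuous_finset_sum _ fun j _ =>
        Real.continuous_negMulLog.comp (hGcont i j)
    calc ∑ σ : Fin n → Fin Φ.n, ∫ x, negMulLog (entPsi T Φ n σ x) ∂μ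
        = ∫ x, (∑ σ : Fin n → Fin Φ.n, negMulLog (entPsi T Φ n σ x)) ∂μ :=
          (integral_finset_sum _ (fun σ _ => cont_integrable μ _
            (Real.continuous_negMulLog.comp (hψcont σ)))).symm
      _ = ∫ x, (∑ i : Fin n, ∑ j : Fin Φ.n, negMulLog (G i j x)) ∂μ :=
          integral_congr_ae (Filter.Eventually.of_forall hpoint)
      _ = ∑ τ : Fin n → Fin Mn,
            ∫ x in entCyl T A τ, (∑ i : Fin n, ∑ j : Fin Φ.n, negMulLog (G i j x)) ∂μ :=
          hsplit _ hgcont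
      _ = ∑ τ : Fin n → Fin Mn, ∑ i : Fin n, ∑ j : Fin Φ.n,
            ∫ x in entCyl T A τ, negMulLog (G i j x) ∂μ := by
          refine Finset.sum_congr rfl fun τ _ => ?_
          rw [integral_finset_sum _ (fun i _ => ?_)]
          · refine Finset.sum_congr rfl fun i _ => ?_
            rw [integral_finset_sum _ (fun j _ => ?_)]
            exact (cont_integrable μ _
              (Real.continuous_negMulLog.comp (hGcont i j))).integrableOn
          · exact Integrable.integrableOn <| cont_integrable μ _ <|
              continuous_finset_sum _ fun j _ =>
                Real.continuous_negMulLog.comp (hGcont i j)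
  have hT1 : ∑ σ : Fin n → Fin Φ.n, negMulLog (∫ x, entPsi T Φ n σ x ∂μ)
      ≤ ∑ τ : Fin n → Fin Mn, ∑ σ : Fin n → Fin Φ.n, negMulLog (P τ σ) := by
    calc ∑ σ : Fin n → Fin Φ.n, negMulLog (∫ x, entPsi T Φ n σ x ∂μ)
        = ∑ σ : Fin n → Fin Φ.n, negMulLog (∑ τ, P τ σ) := by
          refine Finset.sum_congr rfl fun σ _ => ?_; rw [hPtot σ]
      _ ≤ ∑ σ : Fin n → Fin Φ.n, ∑ τ, negMulLog (P τ σ) :=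
          Finset.sum_le_sum fun σ _ =>
            EntAux.negMulLog_sum_le _ _ (fun τ _ => hPnn τ σ)
      _ = ∑ τ, ∑ σ : Fin n → Fin Φ.n, negMulLog (P τ σ) := Finset.sum_comm
  have hfinal : ∑ τ : Fin n → Fin Mn, ∑ σ : Fin n → Fin Φ.n, negMulLog (P τ σ)
      ≤ (∑ τ : Fin n → Fin Mn, ∑ i : Fin n, ∑ j : Fin Φ.n,
          ∫ x in entCyl T A τ, negMulLog (G i j x) ∂μ)
        + (∑ τ : Fin n → Fin Mn, negMulLog ((μ (entCyl T A τ)).toReal))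
        + (n : ℝ) * (Φ.n : ℝ) * κ := by
    calc ∑ τ : Fin n → Fin Mn, ∑ σ : Fin n → Fin Φ.n, negMulLog (P τ σ)
        ≤ ∑ τ : Fin n → Fin Mn,
            ((∑ i : Fin n, ∑ j : Fin Φ.n, ∫ x in entCyl T A τ, negMulLog (G i j x) ∂μ)
              + negMulLog ((μ (entCyl T A τ)).toReal)
              + (n : ℝ) * (Φ.n : ℝ) * κ * (μ (entCyl T A τ)).toReal) :=
          Finset.sum_le_sum fun τ _ => hτbound τ
      _ = (∑ τ : Fin n → Fin Mn, ∑ i : Fin n, ∑ j : Fin Φ.n,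
            ∫ x in entCyl T A τ, negMulLog (G i j x) ∂μ)
          + (∑ τ : Fin n → Fin Mn, negMulLog ((μ (entCyl T A τ)).toReal))
          + (n : ℝ) * (Φ.n : ℝ) * κ := by
          rw [Finset.sum_add_distrib, Finset.sum_add_distrib, ← Finset.mul_sum, hcsum,
            mul_one]
  rw [statEnt_dyn μ T Φ n, Finset.sum_sub_distrib, hT2]
  linarith [hT1, hfinal]

end Main



section Final

open Real MeasureTheory Filter

lemma sum_negMulLog_le_log_card {α : Type*} [Fintype α] [Nonempty α] (p : α → ℝ)
    (hp : ∀ a, 0 ≤ p a) (h1 : ∑ a, p a = 1) :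
    ∑ a, negMulLog (p a) ≤ Real.log (Fintype.card α) := by
  have hcard : (0:ℝ) < (Fintype.card α : ℝ) := by exact_mod_cast Fintype.card_pos
  have hg := EntAux.gibbs Finset.univ p (fun _ => (Fintype.card α : ℝ)⁻¹) (fun a _ => hp a)
    (fun a _ => by positivity)
    (by rw [Finset.sum_const, Finset.card_univ, nsmul_eq_mul,
      mul_inv_cancel₀ (ne_of_gt hcard), h1])
    (fun a _ h => absurd h (by positivity))
  refine hg.trans (le_of_eq ?_)
  have hterm : ∀ a : α, -(p a * Real.log ((Fintype.card α : ℝ)⁻¹))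
      = p a * Real.log (Fintype.card α) := by
    intro a; rw [Real.log_inv]; ring
  rw [Finset.sum_congr rfl fun a _ => hterm a, ← Finset.sum_mul, h1, one_mul]

variable {X : Type*} [MetricSpace X] [CompactSpace X] [Nonempty X]
    [MeasurableSpace X] [BorelSpace X]

lemma integral_negMulLog_le (μ : Measure X) [IsProbabilityMeasure μ] (g : X → ℝ)
    (hg : Continuous g) (h0 : ∀ x, 0 ≤ g x) :
    ∫ x, negMulLog (g x) ∂μ ≤ negMulLog (∫ x, g x ∂μ) := by
  have hanon : 0 ≤ ∫ x, g x ∂μ := integral_nonneg h0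
  rcases eq_or_lt_of_le hanon with ha | ha
  · have hzero : g =ᵐ[μ] 0 :=
      (integral_eq_zero_iff_of_nonneg h0 (cont_integrable μ g hg)).mp ha.symm
    have : (fun x => negMulLog (g x)) =ᵐ[μ] fun _ => 0 := by
      filter_upwards [hzero] with x hx
      simp only [Pi.zero_apply] at hx
      simp [hx]
    rw [integral_congr_ae this, integral_zero, ← ha]
    simp
  · set a := ∫ x, g x ∂μ with hadef
    have hpt : ∀ x, negMulLog (g x) ≤ -(g x) * Real.log a - g x + a := by
      intro x
      rcases eq_or_lt_of_le (h0 x) with hx | hx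
      · rw [← hx]; simp [negMulLog_zero]; positivity
      · have hlog := Real.log_le_sub_one_of_pos (div_pos ha hx)
        rw [Real.log_div (ne_of_gt ha) (ne_of_gt hx)] at hlog
        have h2 := mul_le_mul_of_nonneg_left hlog (le_of_lt hx)
        have h3 : g x * (a / g x - 1) = a - g x := by field_simp
        rw [mul_sub, h3] at h2
        simp only [Real.negMulLog]
        nlinarith [h2, mul_sub (g x) (Real.log a) (Real.log (g x))]
    have hint : ∫ x, negMulLog (g x) ∂μ ≤ ∫ x, (-(g x) * Real.log a - g x + a) ∂μ := by
      refine integral_mono (cont_integrable μ _ (Real.continuous_negMulLog.comp hg)) ?_ hpt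
      exact cont_integrable μ _ (by fun_prop)
    refine hint.trans (le_of_eq ?_)
    rw [integral_add, integral_sub, integral_const]
    · simp only [measureReal_def, measure_univ, ENNReal.toReal_one, smul_eq_mul, one_mul]
      have : ∫ x, -(g x) * Real.log a ∂μ = -a * Real.log a := by
        rw [show (fun x => -(g x) * Real.log a) = fun x => (- Real.log a) * g x from
          funext fun x => by ring]
        rw [integral_const_mul, ← hadef]
        ring
      rw [this, Real.negMulLog]
      ring
    · exact cont_integrable μ _ (by fun_prop)
    · exact cont_integrable μ g hg
    · exact Integrable.sub (cont_integrable μ _ (by fun_prop)) (cont_integrable μ g hg)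
    · exact integrable_const a

lemma statEnt_dyn_nonneg (μ : Measure X) [IsProbabilityMeasure μ] (T : X → X)
    (hT : Continuous T) (Φ : PartUnity X) (hΦ : Φ.Cont) (n : ℕ) :
    0 ≤ statEnt μ (PartUnity.dyn T Φ n) := by
  rw [statEnt_dyn μ T Φ n]
  refine Finset.sum_nonneg fun σ _ => ?_
  have hcont : Continuous (entPsi T Φ n σ) :=
    continuous_finset_prod _ (fun i _ => (hΦ (σ i)).comp (hT.iterate _))
  have := integral_negMulLog_le μ (entPsi T Φ n σ) hcont
    (fun x => Finset.prod_nonneg fun i _ => Φ.nonneg _ _)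
  linarith

lemma cyl_sum (T : X → X) (hT : Continuous T) (μ : Measure X) [IsProbabilityMeasure μ]
    {Mn : ℕ} (A : Fin Mn → Set X) (hAm : ∀ m, MeasurableSet (A m))
    (hAd : ∀ i j, i ≠ j → Disjoint (A i) (A j)) (hAc : ⋃ m, A m = Set.univ) (n : ℕ) :
    ∑ τ : Fin n → Fin Mn, (μ (entCyl T A τ)).toReal = 1 := by
  classical
  have hBmeas : ∀ τ : Fin n → Fin Mn, MeasurableSet (entCyl T A τ) := fun τ =>
    MeasurableSet.iInter fun i => (hT.measurable.iterate _) (hAm (τ i))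
  have hBdisj : Pairwise (Function.onFun Disjoint (entCyl T A (n := n))) := by
    intro τ τ' hττ'
    obtain ⟨i, hi⟩ : ∃ i, τ i ≠ τ' i := by
      by_contra h; push_neg at h; exact hττ' (funext h)
    exact Set.disjoint_of_subset (Set.iInter_subset _ i) (Set.iInter_subset _ i)
      ((hAd _ _ hi).preimage _)
  have hBcover : ⋃ τ : Fin n → Fin Mn, entCyl T A τ = Set.univ := by
    ext x
    simp only [entCyl, Set.mem_iUnion, Set.mem_iInter, Set.mem_preimage, Set.mem_univ,
      iff_true]
    have hx : ∀ i : Fin n, ∃ m, T^[(i : ℕ)] x ∈ A m := by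
      intro i
      have : T^[(i : ℕ)] x ∈ ⋃ m, A m := hAc ▸ Set.mem_univ _
      simpa using this
    choose τ hτ using hx
    exact ⟨τ, fun i => hτ i⟩
  have h1 : ∑' τ : Fin n → Fin Mn, μ (entCyl T A τ) = 1 := by
    rw [← measure_iUnion hBdisj hBmeas, hBcover, measure_univ]
  rw [tsum_fintype] at h1
  rw [← ENNReal.toReal_sum (fun τ _ => measure_ne_top μ _), h1, ENNReal.toReal_one]

lemma fine_partition (δ : ℝ) (hδ : 0 < δ) :
    ∃ (M : ℕ) (A : Fin M → Set X), 0 < M ∧ (∀ m, MeasurableSet (A m)) ∧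
      (∀ i j, i ≠ j → Disjoint (A i) (A j)) ∧ (⋃ m, A m = Set.univ) ∧
      ∀ m, ∀ x ∈ A m, ∀ y ∈ A m, dist x y < δ := by
  classical
  have hr : 0 < δ/3 := by linarith
  obtain ⟨t, ht⟩ := IsCompact.elim_finite_subcover isCompact_univ
    (fun x : X => Metric.ball x (δ/3)) (fun x => Metric.isOpen_ball)
    (fun x _ => Set.mem_iUnion.mpr ⟨x, Metric.mem_ball_self hr⟩)
  set M := Fintype.card ↥t with hM
  set c : Fin M → X := fun i => ((Fintype.equivFin ↥t).symm i : X) with hcdef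
  set A : Fin M → Set X := fun i =>
    Metric.ball (c i) (δ/3) \ ⋃ (l : Fin M) (_ : l < i), Metric.ball (c l) (δ/3) with hA
  obtain ⟨x₀⟩ := (inferInstance : Nonempty X)
  obtain ⟨y₀, hy₀, _⟩ := Set.mem_iUnion₂.mp (ht (Set.mem_univ x₀))
  have hMpos : 0 < M := by
    rw [hM]
    exact Fintype.card_pos_iff.mpr ⟨⟨y₀, hy₀⟩⟩
  have hAsub : ∀ i, A i ⊆ Metric.ball (c i) (δ/3) := fun i => Set.diff_subset
  refine ⟨M, A, hMpos, ?_, ?_, ?_, ?_⟩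
  · intro m
    exact Metric.isOpen_ball.measurableSet.diff
      (MeasurableSet.iUnion fun l => MeasurableSet.iUnion fun _ =>
        Metric.isOpen_ball.measurableSet)
  · have key : ∀ i j : Fin M, i < j → Disjoint (A i) (A j) := by
      intro i j hij
      rw [Set.disjoint_left]
      intro x hxi hxj
      exact hxj.2 (Set.mem_iUnion₂.mpr ⟨i, hij, hxi.1⟩)
    intro i j hij
    rcases lt_or_gt_of_ne hij with h | h
    · exact key i j h
    · exact (key j i h).symm
  · ext x
    simp only [Set.mem_iUnion, Set.mem_univ, iff_true]
    have hmem : ∃ i : Fin M, x ∈ Metric.ball (c i) (δ/3) := by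
      obtain ⟨y, hy, hxy⟩ := Set.mem_iUnion₂.mp (ht (Set.mem_univ x))
      refine ⟨Fintype.equivFin ↥t ⟨y, hy⟩, ?_⟩
      rw [hcdef]
      simp only [Equiv.symm_apply_apply]
      exact hxy
    have hsne : (Finset.univ.filter
        (fun i : Fin M => x ∈ Metric.ball (c i) (δ/3))).Nonempty := by
      obtain ⟨i, hi⟩ := hmem
      exact ⟨i, Finset.mem_filter.mpr ⟨Finset.mem_univ i, hi⟩⟩
    refine ⟨(Finset.univ.filter
        (fun i : Fin M => x ∈ Metric.ball (c i) (δ/3))).min' hsne, ?_⟩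
    have hmin := Finset.min'_mem _ hsne
    rw [Finset.mem_filter] at hmin
    refine ⟨hmin.2, ?_⟩
    intro hxl
    obtain ⟨l, hl, hxl'⟩ := Set.mem_iUnion₂.mp hxl
    have hle := Finset.min'_le (Finset.univ.filter
      (fun i : Fin M => x ∈ Metric.ball (c i) (δ/3))) l
      (Finset.mem_filter.mpr ⟨Finset.mem_univ l, hxl'⟩)
    exact absurd hl (not_lt.mpr hle)
  · intro m x hx y hy
    have h1 := hAsub m hx
    have h2 := hAsub m hy
    rw [Metric.mem_ball] at h1 h2
    calc dist x y ≤ dist x (c m) + dist y (c m) := dist_triangle_right x y (c m)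
      _ < δ/3 + δ/3 := by linarith
      _ < δ := by linarith

/-- The main estimate: `h̃_μ(T,Φ) ≤ h_μ(T,𝒜) + ε` for a fine enough partition. -/
lemma locEnt_le_ksLocEnt (T : X → X) (hT : Continuous T) (μ : Measure X)
    [IsProbabilityMeasure μ] (Φ : PartUnity X) (hΦ : Φ.Cont) (ε : ℝ) (hε : 0 < ε) :
    ∃ P : FinBorelPart X, locEnt T μ Φ ≤ ksLocEnt T μ P + ε := by
  classical
  obtain ⟨x₀⟩ := (inferInstance : Nonempty X)
  have hk : 0 < Φ.n := by
    rcases Nat.eq_zero_or_pos Φ.n with h0 | h0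
    · exfalso
      haveI : IsEmpty (Fin Φ.n) := by rw [h0]; infer_instance
      have h1 := Φ.sum_one x₀
      rw [Finset.univ_eq_empty, Finset.sum_empty] at h1
      norm_num at h1
    · exact h0
  haveI : Nonempty (Fin Φ.n) := ⟨⟨0, hk⟩⟩
  set κ := ε / (2 * Φ.n) with hκdef
  have hκpos : 0 < κ := by
    rw [hκdef]
    have h1 : (0:ℝ) < Φ.n := by exact_mod_cast hk
    have h2 : (0:ℝ) < 2 * (Φ.n : ℝ) := by linarith
    exact div_pos hε h2
  -- modulus of continuity of negMulLog on [0,1]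
  have hucont := Metric.uniformContinuousOn_iff.mp
    (isCompact_Icc.uniformContinuousOn_of_continuous
      (Real.continuous_negMulLog.continuousOn (s := Set.Icc (0:ℝ) 1)))
    κ hκpos
  obtain ⟨ω, hωpos, hω⟩ := hucont
  have hκω : ∀ a b : ℝ, a ∈ Set.Icc (0:ℝ) 1 → b ∈ Set.Icc (0:ℝ) 1 → |a - b| ≤ ω/2 →
      negMulLog a ≤ negMulLog b + κ := by
    intro a b ha hb hab
    have := hω a ha b hb (by rw [Real.dist_eq]; linarith)
    rw [Real.dist_eq] at this
    have h2 := (abs_lt.mp this).2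
    linarith
  -- uniform continuity of the members of Φ
  have hfuc : ∀ j : Fin Φ.n, ∃ d > 0, ∀ x y : X, dist x y < d →
      |Φ.f j x - Φ.f j y| ≤ ω/2 := by
    intro j
    obtain ⟨d, hd, h⟩ := Metric.uniformContinuous_iff.mp
      (CompactSpace.uniformContinuous_of_continuous (hΦ j)) (ω/2) (by linarith)
    exact ⟨d, hd, fun x y hxy => le_of_lt (by have := h hxy; rwa [Real.dist_eq] at this)⟩
  choose df hdf hdf2 using hfuc
  set δ := Finset.univ.inf' Finset.univ_nonempty df with hδdef
  have hδpos : 0 < δ := by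
    rw [hδdef, Finset.lt_inf'_iff]
    exact fun j _ => hdf j
  have hδle : ∀ j, δ ≤ df j := fun j => Finset.inf'_le _ (Finset.mem_univ j)
  obtain ⟨Mn, A, hMpos, hAm, hAd, hAc, hdiam⟩ := fine_partition (X := X) δ hδpos
  have hosc : ∀ m j, ∀ x ∈ A m, ∀ y ∈ A m, |Φ.f j x - Φ.f j y| ≤ ω/2 := by
    intro m j x hx y hy
    exact hdf2 j x y (lt_of_lt_of_le (hdiam m x hx y hy) (hδle j))
  set P : FinBorelPart X := ⟨Mn, A, hAm, hAd, hAc⟩ with hP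
  refine ⟨P, ?_⟩
  have hcore : ∀ n : ℕ, 1 ≤ n → statEnt μ (PartUnity.dyn T Φ n)
      ≤ (∑ τ : Fin n → Fin Mn, negMulLog ((μ (entCyl T A τ)).toReal))
        + (n : ℝ) * (Φ.n : ℝ) * κ :=
    fun n hn => core_estimate T hT μ Φ hΦ A hAm hAd hAc (ω/2) κ hκpos.le hosc hκω n hn
  -- identify with the `ksLocEnt` sums
  have hSeq : ∀ n : ℕ, (∑ σ : Fin n → Fin P.n,
      negMulLog ((μ (⋂ i : Fin n, T^[(i : ℕ)] ⁻¹' P.A (σ i))).toReal))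
      = ∑ τ : Fin n → Fin Mn, negMulLog ((μ (entCyl T A τ)).toReal) := fun n => rfl
  set S : ℕ → ℝ := fun n => ∑ τ : Fin n → Fin Mn, negMulLog ((μ (entCyl T A τ)).toReal)
    with hSdef
  have hSnn : ∀ n, 0 ≤ S n := fun n => Finset.sum_nonneg fun τ _ =>
    negMulLog_nonneg ENNReal.toReal_nonneg (by
      calc (μ (entCyl T A τ)).toReal
          ≤ ∑ τ', (μ (entCyl T A τ')).toReal :=
            Finset.single_le_sum (f := fun τ' => (μ (entCyl T A τ')).toReal)
              (fun τ' _ => ENNReal.toReal_nonneg) (Finset.mem_univ τ)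
        _ = 1 := cyl_sum T hT μ A hAm hAd hAc n)
  have hSle : ∀ n : ℕ, S n ≤ (n : ℝ) * Real.log Mn := by
    intro n
    haveI : Nonempty (Fin Mn) := ⟨⟨0, hMpos⟩⟩
    have := sum_negMulLog_le_log_card (fun τ : Fin n → Fin Mn => (μ (entCyl T A τ)).toReal)
      (fun τ => ENNReal.toReal_nonneg) (cyl_sum T hT μ A hAm hAd hAc n)
    rw [Fintype.card_fun, Fintype.card_fin, Fintype.card_fin] at this
    calc S n ≤ Real.log ((Mn ^ n : ℕ) : ℝ) := this
      _ = (n : ℝ) * Real.log Mn := by rw [Nat.cast_pow, Real.log_pow]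
  have hlogM : 0 ≤ Real.log Mn := Real.log_nonneg (by exact_mod_cast hMpos)
  -- bound the quotient sequence
  have hvle : ∀ n : ℕ, S n / (n : ℝ) ≤ Real.log Mn := by
    intro n
    rcases Nat.eq_zero_or_pos n with h | h
    · simp [h, hlogM]
    · rw [div_le_iff₀ (by exact_mod_cast h)]
      calc S n ≤ (n : ℝ) * Real.log Mn := hSle n
        _ = Real.log Mn * n := by ring
  have hvbdd : IsBoundedUnder (· ≤ ·) atTop (fun n : ℕ => S n / (n : ℝ)) :=
    Filter.isBoundedUnder_of ⟨Real.log Mn, hvle⟩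
  have hksLoc : ksLocEnt T μ P = Filter.atTop.limsup (fun n : ℕ => S n / (n : ℝ)) := rfl
  -- now the limsup comparison
  have hmain : ∀ η : ℝ, 0 < η → locEnt T μ Φ ≤ ksLocEnt T μ P + (Φ.n : ℝ) * κ + η := by
    intro η hη
    have h1 : Filter.atTop.limsup (fun n : ℕ => S n / (n : ℝ))
        < Filter.atTop.limsup (fun n : ℕ => S n / (n : ℝ)) + η := lt_add_of_pos_right _ hη
    have h2 := Filter.eventually_lt_of_limsup_lt h1 hvbdd
    have h3 : ∀ᶠ n : ℕ in atTop, statEnt μ (PartUnity.dyn T Φ n) / (n : ℝ)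
        ≤ ksLocEnt T μ P + (Φ.n : ℝ) * κ + η := by
      filter_upwards [h2, Filter.eventually_ge_atTop 1] with n hn2 hn1
      have hnpos : (0:ℝ) < n := by exact_mod_cast hn1
      have := hcore n hn1
      have hdiv : statEnt μ (PartUnity.dyn T Φ n) / (n : ℝ)
          ≤ S n / (n : ℝ) + (Φ.n : ℝ) * κ := by
        rw [div_le_iff₀ hnpos]
        calc statEnt μ (PartUnity.dyn T Φ n)
            ≤ S n + (n : ℝ) * (Φ.n : ℝ) * κ := this
          _ = (S n / (n : ℝ) + (Φ.n : ℝ) * κ) * (n : ℝ) := by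
              field_simp
      rw [hksLoc]
      linarith [hdiv, le_of_lt hn2]
    have hcob : IsCoboundedUnder (· ≤ ·) atTop
        (fun n : ℕ => statEnt μ (PartUnity.dyn T Φ n) / (n : ℝ)) :=
      Filter.isCoboundedUnder_le_of_le atTop (x := 0) fun n =>
        div_nonneg (statEnt_dyn_nonneg μ T hT Φ hΦ n) (Nat.cast_nonneg n)
    exact Filter.limsup_le_of_le hcob h3
  have hfin : locEnt T μ Φ ≤ ksLocEnt T μ P + (Φ.n : ℝ) * κ := by
    by_contra h
    push_neg at h
    have hη : 0 < (locEnt T μ Φ - (ksLocEnt T μ P + (Φ.n : ℝ) * κ)) / 2 := by linarith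
    have := hmain _ hη
    linarith
  have hκΦ : (Φ.n : ℝ) * κ ≤ ε := by
    have hΦpos : (0:ℝ) < Φ.n := by exact_mod_cast hk
    have heq : (Φ.n : ℝ) * κ = ε / 2 := by
      rw [hκdef]; field_simp
    linarith
  linarith

end Final


/-- `h̃_μ(T) ≤ h_μ(T)`: for every continuous partition of unity `Φ`,
`h̃_μ(T,Φ) ≤ h_μ(T)`, hence the supremum `h̃_μ(T)` is at most the Kolmogorov–Sinai
entropy. -/
theorem metEnt_le_ksEnt {X : Type*} [MetricSpace X] [CompactSpace X] [Nonempty X]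
    [MeasurableSpace X] [BorelSpace X]
    (T : X → X) (hT : Continuous T) (hTsurj : Function.Surjective T)
    (μ : Measure X) [IsProbabilityMeasure μ] (hμ : MeasurePreserving T μ μ) :
    (∀ Φ : PartUnity X, Φ.Cont → ((locEnt T μ Φ : ℝ) : EReal) ≤ ksEnt T μ) ∧
    metEnt T μ ≤ ksEnt T μ := by
  have main : ∀ Φ : PartUnity X, Φ.Cont → ((locEnt T μ Φ : ℝ) : EReal) ≤ ksEnt T μ := by
    intro Φ hΦ
    by_contra hcon
    rw [not_le] at hcon
    have hne_top : ksEnt T μ ≠ ⊤ := ne_top_of_lt (hcon.trans (EReal.coe_lt_top _))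
    have P0 : FinBorelPart X :=
      ⟨1, fun _ => Set.univ, fun _ => MeasurableSet.univ,
        fun i j hij => absurd (Subsingleton.elim i j) hij, Set.iUnion_const Set.univ⟩
    have hbot : ((ksLocEnt T μ P0 : ℝ) : EReal) ≤ ksEnt T μ :=
      le_iSup (fun P : FinBorelPart X => ((ksLocEnt T μ P : ℝ) : EReal)) P0
    have hne_bot : ksEnt T μ ≠ ⊥ := fun h =>
      (EReal.bot_lt_coe (ksLocEnt T μ P0)).not_ge (h ▸ hbot)
    set r := (ksEnt T μ).toReal with hrdef
    have hr : ksEnt T μ = (r : EReal) := (EReal.coe_toReal hne_top hne_bot).symm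
    rw [hr] at hcon
    have hrlt : r < locEnt T μ Φ := EReal.coe_lt_coe_iff.mp hcon
    obtain ⟨P, hPle⟩ := locEnt_le_ksLocEnt T hT μ Φ hΦ ((locEnt T μ Φ - r)/2) (by linarith)
    have hPks : ((ksLocEnt T μ P : ℝ) : EReal) ≤ (r : EReal) :=
      hr ▸ le_iSup (fun P : FinBorelPart X => ((ksLocEnt T μ P : ℝ) : EReal)) P
    have hPr := EReal.coe_le_coe_iff.mp hPks
    linarith
  refine ⟨main, ?_⟩
  rw [metEnt]
  exact iSup_le fun Φ => main Φ.1 Φ.2
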